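/- arXiv:quant-ph/0305154 — 2 statements merged into one kernel-verified Lean document; each statement's English description precedes it below -/
import Mathlib

section
/- Let X be a random variable with distribution P_X on a finite set 𝒳, let F be a random predicate on 𝒳 independent of X, and let {ρ_x}_{x∈𝒳} be a family of density matrices on ℂ^d. For x, x' ∈ 𝒳 set λ_{x,x'} := 2·Pr_{f←P_F}[f(x) = f(x')] − 1. Then d(F(X)|⟨ρ_X,F⟩) ≤ (1/2)·√d · √( Σ_{x,x'∈𝒳} P_X(x)·P_X(x')·λ_{x,x'}·tr(ρ_x ρ_{x'}) ). -/
open Finset ComplexOrder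

/-- The distance of a distribution `P` on a finite set `Z` from the uniform
distribution: `d(P) = (1/2) ∑_z |P z - 1/|Z||`. -/
noncomputable def distUnif {Z : Type*} [Fintype Z] (P : Z → ℝ) : ℝ :=
  (1 / 2) * ∑ z, |P z - 1 / (Fintype.card Z : ℝ)|

/-- For a joint distribution `P` on `W × Z` (given as `P : W → Z → ℝ`), the expected
distance of `Z` from uniform given `W`: `d(Z|W) = ∑_w P_W(w) · d(P_{Z|W=w})`. -/
noncomputable def dCond {W Z : Type*} [Fintype W] [Fintype Z] (P : W → Z → ℝ) : ℝ :=
  ∑ w, (∑ z, P w z) * distUnif (fun z => P w z / ∑ z', P w z')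

/-- A POVM on `ℂ^d` with an arbitrary finite outcome set: a family `{E_w}` of positive
semidefinite `d×d` complex matrices summing to the identity. -/
structure POVM (d : ℕ) where
  ι : Type
  [fin : Fintype ι]
  E : ι → Matrix (Fin d) (Fin d) ℂ
  psd : ∀ w, (E w).PosSemidef
  sum_eq : ∑ w, E w = 1

attribute [instance] POVM.fin

/-- Given `X` with distribution `PX` on `𝒳`, a family `{ρ_x}` of density matrices on
`ℂ^d`, and a function `g : 𝒳 → 𝒵`, the distance of `g(X)` from uniform given `ρ_X`:
the supremum over all POVMs `{E_w}` (with arbitrary finite outcome sets) of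
`d(g(X)|W)`, where `W` is the measurement outcome, with joint distribution
`P_{X W}(x,w) = PX x · tr(E_w ρ_x)`. -/
noncomputable def dQuant {d : ℕ} {𝒳 𝒵 : Type} [Fintype 𝒳] [Fintype 𝒵] [DecidableEq 𝒵]
    (PX : 𝒳 → ℝ) (ρ : 𝒳 → Matrix (Fin d) (Fin d) ℂ) (g : 𝒳 → 𝒵) : ℝ :=
  sSup {r : ℝ | ∃ M : POVM d,
    r = dCond (fun (w : M.ι) (z : 𝒵) =>
      ∑ x ∈ univ.filter (fun x => g x = z), PX x * ((M.E w) * ρ x).trace.re)}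

/- Auxiliary lemmas -/

lemma diag_re_nonneg' {n : Type*} [Fintype n] [DecidableEq n] {M : Matrix n n ℂ}
    (hM : M.PosSemidef) (i : n) : 0 ≤ (M i i).re := by
  have := hM.re_dotProduct_nonneg (Pi.single i 1)
  simpa [dotProduct, Matrix.mulVec, Pi.single_apply, Finset.sum_ite_eq,
    Finset.sum_ite_eq'] using this

lemma trace_re_nonneg' {n : Type*} [Fintype n] [DecidableEq n] {M : Matrix n n ℂ}
    (hM : M.PosSemidef) : 0 ≤ M.trace.re := by
  rw [Matrix.trace, Complex.re_sum]
  exact Finset.sum_nonneg fun i _ => diag_re_nonneg' hM i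

lemma povm_bound' {d : ℕ} (M : POVM d) (Λ : Matrix (Fin d) (Fin d) ℂ)
    (hΛ : Λ.IsHermitian) :
    ∑ w, |((M.E w * Λ).trace.re)| ≤ Real.sqrt d * Real.sqrt ((Λ * Λ).trace.re) := by
  set U : Matrix (Fin d) (Fin d) ℂ := (hΛ.eigenvectorUnitary : Matrix (Fin d) (Fin d) ℂ) with hUdef
  set e : Fin d → ℝ := hΛ.eigenvalues with hedef
  have hUU : star U * U = 1 := (Matrix.mem_unitaryGroup_iff').mp hΛ.eigenvectorUnitary.2
  have hspec : Λ = U * Matrix.diagonal (fun i => (e i : ℂ)) * star U := by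
    exact hΛ.spectral_theorem
  set F : M.ι → Matrix (Fin d) (Fin d) ℂ := fun w => star U * M.E w * U with hFdef
  have hFpsd : ∀ w, (F w).PosSemidef := by
    intro w
    have := (M.psd w).conjTranspose_mul_mul_same (A := M.E w) U
    simpa [hFdef, Matrix.star_eq_conjTranspose] using this
  have htr : ∀ w, (M.E w * Λ).trace.re = ∑ i, (F w i i).re * e i := by
    intro w
    have h1 : M.E w * Λ = (M.E w * U) * Matrix.diagonal (fun i => (e i : ℂ)) * star U := by
      rw [hspec]; simp only [Matrix.mul_assoc]
    rw [h1, Matrix.trace_mul_cycle]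
    rw [show star U * (M.E w * U) * (Matrix.diagonal fun i => ((e i : ℂ)))
        = F w * (Matrix.diagonal fun i => ((e i : ℂ))) from by
      rw [hFdef]; simp only [Matrix.mul_assoc], Matrix.trace]
    rw [Complex.re_sum]
    congr 1; funext i
    simp [Matrix.diag, Matrix.mul_diagonal]
  have hsumF : ∀ i, ∑ w, (F w i i).re = 1 := by
    intro i
    have h1 : (∑ w, F w) = 1 := by
      rw [hFdef, ← Finset.sum_mul, ← Finset.mul_sum, M.sum_eq, mul_one, hUU]
    have h2 : (∑ w, F w) i i = 1 := by rw [h1]; exact Matrix.one_apply_eq i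
    rw [← Complex.re_sum]
    rw [show (∑ w, (F w i i)) = (∑ w, F w) i i by rw [Matrix.sum_apply], h2]
    simp
  have hw : ∀ w, |((M.E w * Λ).trace.re)| ≤ ∑ i, |e i| * (F w i i).re := by
    intro w
    rw [htr w]
    calc |∑ i, (F w i i).re * e i| ≤ ∑ i, |(F w i i).re * e i| := Finset.abs_sum_le_sum_abs _ _
      _ = ∑ i, |e i| * (F w i i).re := by
          congr 1; funext i
          rw [abs_mul, abs_of_nonneg (diag_re_nonneg' (hFpsd w) i), mul_comm]
  have step1 : ∑ w, |((M.E w * Λ).trace.re)| ≤ ∑ i, |e i| := by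
    calc ∑ w, |((M.E w * Λ).trace.re)| ≤ ∑ w, ∑ i, |e i| * (F w i i).re :=
          Finset.sum_le_sum fun w _ => hw w
      _ = ∑ i, |e i| * (∑ w, (F w i i).re) := by
          rw [Finset.sum_comm]; simp [Finset.mul_sum]
      _ = ∑ i, |e i| := by simp [hsumF]
  have htr2 : (Λ * Λ).trace.re = ∑ i, e i ^ 2 := by
    have h1 : Λ * Λ = U * Matrix.diagonal (fun i => (e i : ℂ) ^ 2) * star U := by
      rw [hspec]
      have : (U * Matrix.diagonal (fun i => (e i : ℂ)) * star U) *
          (U * Matrix.diagonal (fun i => (e i : ℂ)) * star U)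
          = U * (Matrix.diagonal (fun i => (e i : ℂ)) * ((star U * U) *
            Matrix.diagonal (fun i => (e i : ℂ)))) * star U := by
        simp only [Matrix.mul_assoc]
      rw [this, hUU, Matrix.one_mul, Matrix.diagonal_mul_diagonal]
      congr 1; congr 1; funext i; ring
    rw [h1, Matrix.trace_mul_cycle, hUU, Matrix.one_mul]
    rw [Matrix.trace_diagonal, Complex.re_sum]
    congr 1; funext i
    rw [show ((e i : ℂ) ^ 2) = ((e i ^ 2 : ℝ) : ℂ) by push_cast; ring, Complex.ofReal_re]
  have step2 : ∑ i, |e i| ≤ Real.sqrt d * Real.sqrt (∑ i, e i ^ 2) := by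
    have := Real.sum_mul_le_sqrt_mul_sqrt Finset.univ (fun _ : Fin d => (1 : ℝ)) (fun i => |e i|)
    simpa [Finset.card_univ, sq_abs] using this
  rw [htr2]
  exact step1.trans step2

lemma dCond_bool_le' {W : Type*} [Fintype W] (P : W → Bool → ℝ) :
    dCond P ≤ (1 / 2) * ∑ w, |P w true - P w false| := by
  rw [dCond, Finset.mul_sum]
  apply Finset.sum_le_sum
  intro w _
  set a := P w false with ha
  set b := P w true with hb
  have hsum : (∑ z, P w z) = b + a := by simp [Fintype.sum_bool, ha, hb]
  rcases le_or_gt (b + a) 0 with h | h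
  · have hd : 0 ≤ distUnif (fun z => P w z / ∑ z', P w z') := by
      rw [distUnif]
      positivity
    have hle : (∑ z, P w z) ≤ 0 := hsum ▸ h
    have : (∑ z, P w z) * distUnif (fun z => P w z / ∑ z', P w z') ≤ 0 :=
      mul_nonpos_of_nonpos_of_nonneg hle hd
    exact this.trans (by positivity)
  · have hS : (b + a) ≠ 0 := ne_of_gt h
    have hcard : (Fintype.card Bool : ℝ) = 2 := by simp
    have hdist : distUnif (fun z => P w z / ∑ z', P w z') = |b - a| / (2 * (b + a)) := by
      rw [distUnif, hcard, Fintype.sum_bool]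
      simp only [hsum]
      have e1 : b / (b + a) - 1 / 2 = (b - a) / (2 * (b + a)) := by field_simp; ring
      have e2 : a / (b + a) - 1 / 2 = -((b - a) / (2 * (b + a))) := by field_simp; ring
      rw [e1, e2, abs_neg, abs_div, abs_of_pos (by linarith : (0:ℝ) < 2 * (b + a))]
      ring
    rw [hdist, hsum]
    rw [show (b + a) * (|b - a| / (2 * (b + a))) = |b - a| / 2 by field_simp]
    apply le_of_eq; ring

lemma jensen_sqrt' {ι : Type*} [Fintype ι] (p T : ι → ℝ) (hp : ∀ i, 0 ≤ p i)
    (hp1 : ∑ i, p i = 1) (hT : ∀ i, 0 ≤ T i) :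
    ∑ i, p i * Real.sqrt (T i) ≤ Real.sqrt (∑ i, p i * T i) := by
  have h := Real.sum_sqrt_mul_sqrt_le (f := p) (g := fun i => p i * T i) Finset.univ
    (fun i => hp i) (fun i => mul_nonneg (hp i) (hT i))
  have hL : ∑ i, Real.sqrt (p i) * Real.sqrt (p i * T i) = ∑ i, p i * Real.sqrt (T i) := by
    apply Finset.sum_congr rfl
    intro i _
    rw [Real.sqrt_mul (hp i), ← mul_assoc, Real.mul_self_sqrt (hp i)]
  rw [hL, hp1, Real.sqrt_one, one_mul] at h
  exact h

/-- **Theorem `thm:mainschur`**: for a random variable `X` with distribution `PX` on a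
finite set `𝒳`, a random predicate `F` (distribution `PF` on functions `𝒳 → {0,1}`,
independent of `X`), and a family `{ρ_x}` of density matrices on `ℂ^d`, setting
`λ_{x,x'} := 2·Pr_f[f(x) = f(x')] - 1`,
`d(F(X)|⟨ρ_X,F⟩) ≤ (1/2)·√d·√(∑_{x,x'} P_X(x)·P_X(x')·λ_{x,x'}·tr(ρ_x ρ_{x'}))`. -/
theorem thm_mainschur {d : ℕ} {𝒳 : Type} [Fintype 𝒳] [DecidableEq 𝒳]
    (PX : 𝒳 → ℝ) (hPX0 : ∀ x, 0 ≤ PX x) (hPX1 : ∑ x, PX x = 1)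
    (PF : (𝒳 → Bool) → ℝ) (hPF0 : ∀ f, 0 ≤ PF f) (hPF1 : ∑ f, PF f = 1)
    (ρ : 𝒳 → Matrix (Fin d) (Fin d) ℂ)
    (hρ : ∀ x, (ρ x).PosSemidef) (hρt : ∀ x, (ρ x).trace = 1) :
    ∑ f, PF f * dQuant PX ρ f
      ≤ (1 / 2) * Real.sqrt d *
          Real.sqrt (∑ x, ∑ x', PX x * PX x' *
            (2 * (∑ f ∈ univ.filter (fun f => f x = f x'), PF f) - 1) *
            ((ρ x * ρ x').trace.re)) := by
  classical
  set s : (𝒳 → Bool) → 𝒳 → ℝ := fun f x => if f x then 1 else -1 with hsdef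
  set Λm : (𝒳 → Bool) → Matrix (Fin d) (Fin d) ℂ :=
    fun f => ∑ x, (((PX x * s f x : ℝ)) : ℂ) • ρ x with hΛdef
  have hHerm : ∀ f, (Λm f).IsHermitian := by
    intro f
    unfold Matrix.IsHermitian
    rw [hΛdef]
    simp only [Matrix.conjTranspose_sum, Matrix.conjTranspose_smul]
    apply Finset.sum_congr rfl
    intro x _
    rw [(hρ x).isHermitian, RCLike.star_def, Complex.conj_ofReal]
  set T : (𝒳 → Bool) → ℝ := fun f => ((Λm f * Λm f).trace.re) with hTdef
  have hT0 : ∀ f, 0 ≤ T f := by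
    intro f
    have h1 : (Λm f).conjTranspose * Λm f = Λm f * Λm f := by
      have := hHerm f
      rw [Matrix.IsHermitian] at this
      rw [this]
    rw [hTdef]
    simp only
    rw [← h1]
    exact trace_re_nonneg' (Matrix.posSemidef_conjTranspose_mul_self _)
  -- difference identity
  have hdiff : ∀ (f : 𝒳 → Bool) (M : POVM d) (w : M.ι),
      (∑ x ∈ univ.filter (fun x => f x = true), PX x * ((M.E w) * ρ x).trace.re)
      - (∑ x ∈ univ.filter (fun x => f x = false), PX x * ((M.E w) * ρ x).trace.re)
      = (M.E w * Λm f).trace.re := by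
    intro f M w
    have hR : (M.E w * Λm f).trace.re
        = ∑ x, (PX x * s f x) * ((M.E w) * ρ x).trace.re := by
      rw [hΛdef]
      simp only
      rw [Finset.mul_sum, Matrix.trace_sum, Complex.re_sum]
      apply Finset.sum_congr rfl
      intro x _
      rw [Matrix.mul_smul, Matrix.trace_smul]
      simp [Complex.smul_re]
    rw [hR, Finset.sum_filter, Finset.sum_filter, ← Finset.sum_sub_distrib]
    apply Finset.sum_congr rfl
    intro x _
    cases hfx : f x <;> simp [hsdef, hfx] <;> ring
  -- Key 1: pointwise bound on dQuant
  have key1 : ∀ f, dQuant PX ρ f ≤ (1 / 2) * (Real.sqrt d * Real.sqrt (T f)) := by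
    intro f
    apply Real.sSup_le
    · rintro r ⟨M, rfl⟩
      calc dCond _ ≤ (1 / 2) * ∑ w, |(∑ x ∈ univ.filter (fun x => f x = true),
              PX x * ((M.E w) * ρ x).trace.re)
            - (∑ x ∈ univ.filter (fun x => f x = false), PX x * ((M.E w) * ρ x).trace.re)| :=
            dCond_bool_le' _
        _ = (1 / 2) * ∑ w, |(M.E w * Λm f).trace.re| := by
            congr 1
            apply Finset.sum_congr rfl
            intro w _
            rw [hdiff f M w]
        _ ≤ (1 / 2) * (Real.sqrt d * Real.sqrt (T f)) := by
            apply mul_le_mul_of_nonneg_left _ (by norm_num)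
            exact povm_bound' M (Λm f) (hHerm f)
    · positivity
  -- Key 2: expansion of T
  have key2 : ∀ f, T f = ∑ x, ∑ x',
      (PX x * s f x) * (PX x' * s f x') * ((ρ x * ρ x').trace.re) := by
    intro f
    rw [hTdef]
    simp only
    rw [hΛdef]
    simp only
    rw [Finset.sum_mul_sum]
    rw [Matrix.trace_sum, Complex.re_sum]
    apply Finset.sum_congr rfl
    intro x _
    rw [Matrix.trace_sum, Complex.re_sum]
    apply Finset.sum_congr rfl
    intro x' _
    rw [Matrix.smul_mul, Matrix.mul_smul, Matrix.trace_smul, Matrix.trace_smul]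
    simp [Complex.smul_re]
    ring
  -- sign sum identity
  have hsign : ∀ x x' : 𝒳, ∑ f, PF f * (s f x * s f x')
      = 2 * (∑ f ∈ univ.filter (fun f => f x = f x'), PF f) - 1 := by
    intro x x'
    have hterm : ∀ f : 𝒳 → Bool, s f x * s f x'
        = 2 * (if f x = f x' then (1 : ℝ) else 0) - 1 := by
      intro f
      cases hx : f x <;> cases hx' : f x' <;> simp [hsdef, hx, hx'] <;> norm_num
    calc ∑ f, PF f * (s f x * s f x')
        = ∑ f, (2 * (if f x = f x' then PF f else 0) - PF f) := by
          apply Finset.sum_congr rfl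
          intro f _
          rw [hterm f]
          by_cases h : f x = f x' <;> simp [h] <;> ring
      _ = 2 * (∑ f, if f x = f x' then PF f else 0) - ∑ f, PF f := by
          rw [Finset.sum_sub_distrib, Finset.mul_sum]
      _ = 2 * (∑ f ∈ univ.filter (fun f => f x = f x'), PF f) - 1 := by
          rw [Finset.sum_filter, hPF1]
  -- Key 3
  have key3 : ∑ f, PF f * T f = ∑ x, ∑ x', PX x * PX x' *
      (2 * (∑ f ∈ univ.filter (fun f => f x = f x'), PF f) - 1) *
      ((ρ x * ρ x').trace.re) := by
    calc ∑ f, PF f * T f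
        = ∑ f, ∑ x, ∑ x', PF f * ((PX x * s f x) * (PX x' * s f x')
            * ((ρ x * ρ x').trace.re)) := by
          apply Finset.sum_congr rfl
          intro f _
          rw [key2 f, Finset.mul_sum]
          apply Finset.sum_congr rfl
          intro x _
          rw [Finset.mul_sum]
      _ = ∑ x, ∑ x', ∑ f, PF f * ((PX x * s f x) * (PX x' * s f x')
            * ((ρ x * ρ x').trace.re)) := by
          rw [Finset.sum_comm]
          apply Finset.sum_congr rfl
          intro x _
          rw [Finset.sum_comm]
      _ = ∑ x, ∑ x', PX x * PX x' *
            (2 * (∑ f ∈ univ.filter (fun f => f x = f x'), PF f) - 1) *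
            ((ρ x * ρ x').trace.re) := by
          apply Finset.sum_congr rfl; intro x _
          apply Finset.sum_congr rfl; intro x' _
          rw [← hsign x x', Finset.mul_sum, Finset.sum_mul]
          apply Finset.sum_congr rfl
          intro f _
          ring
  -- final chain
  calc ∑ f, PF f * dQuant PX ρ f
      ≤ ∑ f, PF f * ((1 / 2) * (Real.sqrt d * Real.sqrt (T f))) := by
        apply Finset.sum_le_sum
        intro f _
        exact mul_le_mul_of_nonneg_left (key1 f) (hPF0 f)
    _ = (1 / 2) * Real.sqrt d * ∑ f, PF f * Real.sqrt (T f) := by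
        rw [Finset.mul_sum]
        apply Finset.sum_congr rfl
        intro f _
        ring
    _ ≤ (1 / 2) * Real.sqrt d * Real.sqrt (∑ f, PF f * T f) := by
        apply mul_le_mul_of_nonneg_left _ (by positivity)
        exact jensen_sqrt' PF T hPF0 hPF1 hT0
    _ = _ := by rw [key3]
end

section
/- Let X be uniformly distributed on {0,1}² and let F be a uniform balanced random predicate on {0,1}², independent of X. Then there exists a family {ρ_x}_{x∈{0,1}²} of density matrices on ℂ² (which can be taken to be rank-one projections onto the vertices of a regular tetrahedron in the Bloch sphere) such that d(F(X)|⟨ρ_X,F⟩) = 1/(2√3). -/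
open Finset ComplexOrder

/-- The balanced predicates on `{0,1}²` (predicates taking each of the two values on
exactly half of the domain); `{0,1}` is identified with `Bool`. -/
def Bal : Finset ((Bool × Bool) → Bool) :=
  univ.filter (fun f =>
    (univ.filter (fun x => f x = false)).card = (univ.filter (fun x => f x = true)).card)

/-- The distribution of a uniform balanced random predicate on `{0,1}²`. -/
noncomputable def PF (f : (Bool × Bool) → Bool) : ℝ :=
  if f ∈ Bal then (Bal.card : ℝ)⁻¹ else 0

/-! ### Auxiliary material -/

section Aux

open Matrix

open scoped MatrixOrder in
lemma trace_mul_psd_nonneg {n : ℕ} {A B : Matrix (Fin n) (Fin n) ℂ}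
    (hA : A.PosSemidef) (hB : B.PosSemidef) : 0 ≤ (A * B).trace := by
  have h1 : (A * B).trace = ((CFC.sqrt B) * A * (CFC.sqrt B)).trace := by
    conv_lhs => rw [← (CFC.sqrt_mul_sqrt_self B hB.nonneg)]
    rw [← Matrix.mul_assoc, Matrix.trace_mul_cycle]
  rw [h1]
  have hpsd : ((CFC.sqrt B) * A * (CFC.sqrt B)).PosSemidef := by
    have := hA.conjTranspose_mul_mul_same (CFC.sqrt B)
    rwa [(CFC.sqrt_nonneg B).posSemidef.1.eq] at this
  exact hpsd.trace_nonneg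

lemma trace_mul_psd_re_nonneg {n : ℕ} {A B : Matrix (Fin n) (Fin n) ℂ}
    (hA : A.PosSemidef) (hB : B.PosSemidef) : 0 ≤ (A * B).trace.re :=
  (Complex.le_def.mp (trace_mul_psd_nonneg hA hB)).1

lemma psd_of_entries (p r : ℝ) (q : ℂ) (hp : 0 ≤ p) (hr : 0 ≤ r)
    (h : Complex.normSq q ≤ p * r) :
    (!![(p : ℂ), q; (starRingEnd ℂ) q, (r : ℂ)]).PosSemidef := by
  rw [Matrix.posSemidef_iff_dotProduct_mulVec]
  constructor
  · ext i j
    fin_cases i <;> fin_cases j <;>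
      simp [Matrix.conjTranspose_apply, Complex.conj_ofReal]
  · intro x
    simp only [dotProduct, Matrix.mulVec, Fin.sum_univ_two, Pi.star_apply,
      Matrix.cons_val', Matrix.cons_val_zero, Matrix.cons_val_one, Matrix.head_cons,
      Matrix.empty_val', Matrix.cons_val_fin_one, Matrix.head_fin_const,
      Matrix.cons_mulVec, Matrix.cons_dotProduct, Matrix.of_apply]
    simp only [RCLike.star_def]
    rw [Complex.le_def]
    rw [Complex.normSq_apply] at h
    constructor
    · simp only [Complex.add_re, Complex.mul_re, Complex.mul_im, Complex.zero_re,
        Complex.add_im, Complex.ofReal_re, Complex.ofReal_im,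
        Complex.conj_re, Complex.conj_im]
      rcases hp.eq_or_lt with hp0 | hp0
      · have h1 : q.re = 0 := by nlinarith [sq_nonneg q.re, sq_nonneg q.im]
        have h2 : q.im = 0 := by nlinarith [sq_nonneg q.re, sq_nonneg q.im]
        rw [h1, h2, ← hp0]
        nlinarith [sq_nonneg (x 1).re, sq_nonneg (x 1).im, sq_nonneg (x 0).re,
          sq_nonneg (x 0).im]
      · nlinarith [sq_nonneg (p * (x 0).re + q.re * (x 1).re - q.im * (x 1).im),
          sq_nonneg (p * (x 0).im + q.re * (x 1).im + q.im * (x 1).re),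
          mul_nonneg (sub_nonneg.2 h) (add_nonneg (sq_nonneg (x 1).re) (sq_nonneg (x 1).im)),
          hp0.le]
    · simp only [Complex.add_re, Complex.mul_re, Complex.mul_im, Complex.zero_im,
        Complex.add_im, Complex.ofReal_re, Complex.ofReal_im,
        Complex.conj_re, Complex.conj_im]
      ring

lemma binary_term (P : Bool → ℝ) (h0 : 0 ≤ P false) (h1 : 0 ≤ P true) :
    (∑ z, P z) * distUnif (fun z => P z / ∑ z', P z') = (1 / 2) * |P false - P true| := by
  rw [Fintype.sum_bool]
  rcases eq_or_lt_of_le (add_nonneg h1 h0) with hS | hS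
  · have hf : P false = 0 := by linarith [(by linarith : P true + P false = 0)]
    have ht : P true = 0 := by linarith
    simp [hf, ht]
  · have hS' : P true + P false ≠ 0 := ne_of_gt hS
    unfold distUnif
    rw [Fintype.sum_bool]
    simp only [Fintype.card_bool, Nat.cast_ofNat]
    have e1 : P true / (P true + P false) - 1 / 2
        = (P true - P false) / (2 * (P true + P false)) := by field_simp; ring
    have e2 : P false / (P true + P false) - 1 / 2
        = -((P true - P false) / (2 * (P true + P false))) := by field_simp; ring
    rw [e1, e2, abs_neg]
    rw [abs_div, abs_of_pos (by linarith : (0:ℝ) < 2 * (P true + P false))]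
    have : |P false - P true| = |P true - P false| := abs_sub_comm _ _
    rw [this]
    field_simp
    ring

noncomputable def tc : ℝ := (Real.sqrt 3)⁻¹

lemma tc_pos : 0 < tc := by unfold tc; positivity

lemma tc_sq : tc * tc = 1 / 3 := by
  unfold tc
  rw [← mul_inv, Real.mul_self_sqrt (by norm_num : (3:ℝ) ≥ 0)]
  norm_num

lemma tc_lt_one : tc < 1 := by nlinarith [tc_sq, tc_pos]

/-- The generic Hermitian-form 2×2 matrix. -/
noncomputable def proj2 (p r : ℝ) (q : ℂ) : Matrix (Fin 2) (Fin 2) ℂ :=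
  !![(p : ℂ), q; (starRingEnd ℂ) q, (r : ℂ)]

/-- The four tetrahedron states. -/
noncomputable def rho : Bool × Bool → Matrix (Fin 2) (Fin 2) ℂ
  | (false, false) => proj2 ((1+tc)/2) ((1-tc)/2) (((tc/2 : ℝ) : ℂ) * (1 - Complex.I))
  | (false, true)  => proj2 ((1-tc)/2) ((1+tc)/2) (((tc/2 : ℝ) : ℂ) * (1 + Complex.I))
  | (true, false)  => proj2 ((1-tc)/2) ((1+tc)/2) (((tc/2 : ℝ) : ℂ) * (-1 - Complex.I))
  | (true, true)   => proj2 ((1+tc)/2) ((1-tc)/2) (((tc/2 : ℝ) : ℂ) * (-1 + Complex.I))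

noncomputable def Pxp := proj2 (1/2) (1/2) ((1/2 : ℝ) : ℂ)
noncomputable def Pxm := proj2 (1/2) (1/2) ((-(1/2) : ℝ) : ℂ)
noncomputable def Pyp := proj2 (1/2) (1/2) (-(Complex.I)/2)
noncomputable def Pym := proj2 (1/2) (1/2) (Complex.I/2)
noncomputable def Pzp := proj2 1 0 0
noncomputable def Pzm := proj2 0 1 0

lemma rho_psd : ∀ x, (rho x).PosSemidef := by
  have h1 : (0:ℝ) ≤ (1+tc)/2 := by nlinarith [tc_pos]
  have h2 : (0:ℝ) ≤ (1-tc)/2 := by nlinarith [tc_lt_one]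
  have hpr : (1+tc)/2 * ((1-tc)/2) = 1/6 := by nlinarith [tc_sq]
  have hI1 : Complex.normSq (1 - Complex.I) = 2 := by
    simp [Complex.normSq_apply]; norm_num
  have hI2 : Complex.normSq (1 + Complex.I) = 2 := by
    simp [Complex.normSq_apply]; norm_num
  have hI3 : Complex.normSq (-1 - Complex.I) = 2 := by
    simp [Complex.normSq_apply]; norm_num
  have hI4 : Complex.normSq (-1 + Complex.I) = 2 := by
    simp [Complex.normSq_apply]; norm_num
  have hq : (tc/2) * (tc/2) * 2 = 1/6 := by nlinarith [tc_sq]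
  rintro ⟨b1, b2⟩
  cases b1 <;> cases b2 <;>
  · apply psd_of_entries _ _ _ (by assumption) (by assumption)
    rw [Complex.normSq_mul, Complex.normSq_ofReal]
    first
      | (rw [hI1]; nlinarith [tc_sq])
      | (rw [hI2]; nlinarith [tc_sq])
      | (rw [hI3]; nlinarith [tc_sq])
      | (rw [hI4]; nlinarith [tc_sq])

lemma rho_trace : ∀ x, (rho x).trace = 1 := by
  rintro ⟨b1, b2⟩
  cases b1 <;> cases b2 <;>
  · show (proj2 _ _ _).trace = 1
    rw [proj2, Matrix.trace_fin_two]
    norm_num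
    ring

end Aux

section Main
open Matrix

noncomputable def povm2 (Pp Pm : Matrix (Fin 2) (Fin 2) ℂ)
    (hp : Pp.PosSemidef) (hm : Pm.PosSemidef) (hsum : Pp + Pm = 1) : POVM 2 where
  ι := Bool
  E := fun b => if b then Pm else Pp
  psd := by intro b; cases b <;> simpa
  sum_eq := by rw [Fintype.sum_bool]; simp; rw [add_comm]; exact hsum

lemma rho_nonneg_term (M : POVM 2) (w : M.ι) (x : Bool × Bool) :
    0 ≤ (1/4 : ℝ) * ((M.E w) * rho x).trace.re :=
  mul_nonneg (by norm_num) (trace_mul_psd_re_nonneg (M.psd w) (rho_psd x))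

lemma dq_eq (f : Bool × Bool → Bool) (Pp Pm : Matrix (Fin 2) (Fin 2) ℂ)
    (hp : Pp.PosSemidef) (hm : Pm.PosSemidef) (hsum : Pp + Pm = 1)
    (hΔ : (∑ x ∈ univ.filter (fun x => f x = false), rho x)
        = (∑ x ∈ univ.filter (fun x => f x = true), rho x) + ((2 * tc : ℝ) : ℂ) • (Pp - Pm))
    (hpp : (Pp * (Pp - Pm)).trace.re = 1)
    (hmm' : (Pm * (Pp - Pm)).trace.re = -1) :
    dQuant (fun _ => (1 / 4 : ℝ)) rho f = tc / 2 := by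
  have hdq : dQuant (fun _ => (1 / 4 : ℝ)) rho f = sSup {r : ℝ | ∃ M : POVM 2,
      r = dCond (fun (w : M.ι) (z : Bool) =>
        ∑ x ∈ univ.filter (fun x => f x = z), (1/4 : ℝ) * ((M.E w) * rho x).trace.re)} := rfl
  rw [hdq]
  have key : ∀ M : POVM 2,
      dCond (fun (w : M.ι) (z : Bool) =>
        ∑ x ∈ univ.filter (fun x => f x = z), (1/4 : ℝ) * ((M.E w) * rho x).trace.re)
      = ∑ w : M.ι, (tc/4) * |((M.E w) * Pp).trace.re - ((M.E w) * Pm).trace.re| := by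
    intro M
    unfold dCond
    apply Finset.sum_congr rfl
    intro w _
    have hb := binary_term
      (fun z => ∑ x ∈ univ.filter (fun x => f x = z), (1/4 : ℝ) * ((M.E w) * rho x).trace.re)
      (Finset.sum_nonneg fun x _ => rho_nonneg_term M w x)
      (Finset.sum_nonneg fun x _ => rho_nonneg_term M w x)
    rw [hb]
    have lin : ∀ s : Finset (Bool × Bool),
        ∑ x ∈ s, (1/4:ℝ) * ((M.E w) * rho x).trace.re
          = (1/4) * ((M.E w) * ∑ x ∈ s, rho x).trace.re := by
      intro s
      rw [Matrix.mul_sum, Matrix.trace_sum, Complex.re_sum, Finset.mul_sum]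
    have hdiff : (∑ x ∈ univ.filter (fun x => f x = false), (1/4:ℝ) * ((M.E w) * rho x).trace.re)
        - (∑ x ∈ univ.filter (fun x => f x = true), (1/4:ℝ) * ((M.E w) * rho x).trace.re)
        = (tc/2) * (((M.E w) * Pp).trace.re - ((M.E w) * Pm).trace.re) := by
      rw [lin, lin, hΔ]
      rw [Matrix.mul_add, Matrix.trace_add, Complex.add_re]
      rw [Matrix.mul_smul, Matrix.trace_smul, smul_eq_mul, Complex.re_ofReal_mul]
      rw [Matrix.mul_sub, Matrix.trace_sub, Complex.sub_re]
      ring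
    rw [hdiff, abs_mul, abs_of_nonneg (by nlinarith [tc_pos] : (0:ℝ) ≤ tc/2)]
    ring
  have ub : ∀ r ∈ {r : ℝ | ∃ M : POVM 2,
      r = dCond (fun (w : M.ι) (z : Bool) =>
        ∑ x ∈ univ.filter (fun x => f x = z), (1/4 : ℝ) * ((M.E w) * rho x).trace.re)},
      r ≤ tc / 2 := by
    rintro r ⟨M, rfl⟩
    rw [key M]
    have step : ∀ w : M.ι, (tc/4) * |((M.E w) * Pp).trace.re - ((M.E w) * Pm).trace.re|
        ≤ (tc/4) * (M.E w).trace.re := by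
      intro w
      have ha := trace_mul_psd_re_nonneg (M.psd w) hp
      have hb := trace_mul_psd_re_nonneg (M.psd w) hm
      have hab : ((M.E w) * Pp).trace.re + ((M.E w) * Pm).trace.re = (M.E w).trace.re := by
        rw [← Complex.add_re, ← Matrix.trace_add, ← Matrix.mul_add, hsum, Matrix.mul_one]
      apply mul_le_mul_of_nonneg_left _ (by nlinarith [tc_pos] : (0:ℝ) ≤ tc/4)
      rw [abs_le]
      constructor <;> linarith
    calc ∑ w : M.ι, (tc/4) * |((M.E w) * Pp).trace.re - ((M.E w) * Pm).trace.re|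
        ≤ ∑ w : M.ι, (tc/4) * (M.E w).trace.re := Finset.sum_le_sum fun w _ => step w
      _ = (tc/4) * (∑ w : M.ι, (M.E w)).trace.re := by
          rw [Matrix.trace_sum, Complex.re_sum, Finset.mul_sum]
      _ = tc / 2 := by
          rw [M.sum_eq]
          simp [Matrix.trace_one]
          ring
  have hval : dCond (fun (w : (povm2 Pp Pm hp hm hsum).ι) (z : Bool) =>
      ∑ x ∈ univ.filter (fun x => f x = z),
        (1/4 : ℝ) * (((povm2 Pp Pm hp hm hsum).E w) * rho x).trace.re) = tc / 2 := by
    rw [key (povm2 Pp Pm hp hm hsum)]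
    show ∑ w : Bool, _ = tc / 2
    rw [Fintype.sum_bool]
    rw [Matrix.mul_sub, Matrix.trace_sub, Complex.sub_re] at hpp hmm'
    simp only [povm2, if_true, if_false, Bool.false_eq_true, ite_false, ite_true]
    rw [hpp, hmm']
    rw [abs_one, abs_neg, abs_one]
    ring
  apply le_antisymm
  · exact csSup_le ⟨_, ⟨povm2 Pp Pm hp hm hsum, hval.symm⟩⟩ ub
  · exact le_csSup ⟨tc/2, fun r hr => ub r hr⟩ ⟨povm2 Pp Pm hp hm hsum, hval.symm⟩

end Main

section Projectors
open Matrix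

lemma Pxp_psd : Pxp.PosSemidef :=
  psd_of_entries (1/2) (1/2) _ (by norm_num) (by norm_num)
    (by simp [Complex.normSq_ofReal])

lemma Pxm_psd : Pxm.PosSemidef :=
  psd_of_entries (1/2) (1/2) _ (by norm_num) (by norm_num)
    (by simp [Complex.normSq_ofReal])

lemma Pyp_psd : Pyp.PosSemidef :=
  psd_of_entries (1/2) (1/2) _ (by norm_num) (by norm_num)
    (by simp [Complex.normSq_apply])

lemma Pym_psd : Pym.PosSemidef :=
  psd_of_entries (1/2) (1/2) _ (by norm_num) (by norm_num)
    (by simp [Complex.normSq_apply])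

lemma Pzp_psd : Pzp.PosSemidef :=
  psd_of_entries 1 0 _ (by norm_num) (by norm_num) (by simp)

lemma Pzm_psd : Pzm.PosSemidef :=
  psd_of_entries 0 1 _ (by norm_num) (by norm_num) (by simp)

lemma Px_sum : Pxp + Pxm = 1 := by
  ext i j
  fin_cases i <;> fin_cases j <;>
    simp [Pxp, Pxm, proj2, Matrix.one_apply, Complex.conj_ofReal] <;> norm_num

lemma Py_sum : Pyp + Pym = 1 := by
  ext i j
  fin_cases i <;> fin_cases j <;>
    simp [Pyp, Pym, proj2, Matrix.one_apply, Complex.conj_ofReal, map_div₀,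
      Complex.conj_I, _root_.map_neg, map_ofNat] <;> ring

lemma Pz_sum : Pzp + Pzm = 1 := by
  ext i j
  fin_cases i <;> fin_cases j <;>
    simp [Pzp, Pzm, proj2, Matrix.one_apply, Complex.conj_ofReal]

lemma Px_tr1 : (Pxp * (Pxp - Pxm)).trace.re = 1 := by
  simp [Pxp, Pxm, proj2, Matrix.mul_sub, Matrix.trace_sub, Matrix.mul_fin_two,
    Matrix.trace_fin_two, Complex.conj_ofReal]
  norm_num

lemma Px_tr2 : (Pxm * (Pxp - Pxm)).trace.re = -1 := by
  simp [Pxp, Pxm, proj2, Matrix.mul_sub, Matrix.trace_sub, Matrix.mul_fin_two,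
    Matrix.trace_fin_two, Complex.conj_ofReal]
  norm_num

lemma Py_tr1 : (Pyp * (Pyp - Pym)).trace.re = 1 := by
  simp [Pyp, Pym, proj2, Matrix.mul_sub, Matrix.trace_sub, Matrix.mul_fin_two,
    Matrix.trace_fin_two, map_div₀, Complex.conj_I, _root_.map_neg, map_ofNat,
    Complex.div_re, Complex.div_im, Complex.normSq_apply]
  norm_num

lemma Py_tr2 : (Pym * (Pyp - Pym)).trace.re = -1 := by
  simp [Pyp, Pym, proj2, Matrix.mul_sub, Matrix.trace_sub, Matrix.mul_fin_two,
    Matrix.trace_fin_two, map_div₀, Complex.conj_I, _root_.map_neg, map_ofNat,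
    Complex.div_re, Complex.div_im, Complex.normSq_apply]
  norm_num

lemma Pz_tr1 : (Pzp * (Pzp - Pzm)).trace.re = 1 := by
  simp [Pzp, Pzm, proj2, Matrix.mul_sub, Matrix.trace_sub, Matrix.mul_fin_two,
    Matrix.trace_fin_two]

lemma Pz_tr2 : (Pzm * (Pzp - Pzm)).trace.re = -1 := by
  simp [Pzp, Pzm, proj2, Matrix.mul_sub, Matrix.trace_sub, Matrix.mul_fin_two,
    Matrix.trace_fin_two]

end Projectors

section Deltas
open Matrix

lemma tr_swap_pos {A B C : Matrix (Fin 2) (Fin 2) ℂ} (h : (A * (B - C)).trace.re = -1) :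
    (A * (C - B)).trace.re = 1 := by
  rw [← neg_sub, Matrix.mul_neg, Matrix.trace_neg, Complex.neg_re, h]; norm_num

lemma tr_swap_neg {A B C : Matrix (Fin 2) (Fin 2) ℂ} (h : (A * (B - C)).trace.re = 1) :
    (A * (C - B)).trace.re = -1 := by
  rw [← neg_sub, Matrix.mul_neg, Matrix.trace_neg, Complex.neg_re, h]

lemma Delta_x1 : (∑ x ∈ univ.filter (fun x : Bool × Bool => x.1 = false), rho x)
    = (∑ x ∈ univ.filter (fun x : Bool × Bool => x.1 = true), rho x)
      + ((2 * tc : ℝ) : ℂ) • (Pxp - Pxm) := by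
  rw [show (univ.filter (fun x : Bool × Bool => x.1 = false))
        = {(false, false), (false, true)} by decide,
      show (univ.filter (fun x : Bool × Bool => x.1 = true))
        = {(true, false), (true, true)} by decide]
  rw [Finset.sum_insert (by decide), Finset.sum_singleton,
      Finset.sum_insert (by decide), Finset.sum_singleton]
  show rho (false, false) + rho (false, true) = rho (true, false) + rho (true, true) + _
  simp only [rho, proj2, Pxp, Pxm]
  ext i j
  fin_cases i <;> fin_cases j <;>
    simp [Matrix.add_apply, Matrix.smul_apply, Matrix.sub_apply, _root_.map_mul, map_div₀,
      map_ofNat, _root_.map_sub, _root_.map_add, _root_.map_one, _root_.map_neg,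
      Complex.conj_I, Complex.conj_ofReal, Complex.ext_iff, Complex.add_re, Complex.add_im,
      Complex.mul_re, Complex.mul_im] <;>
    (try constructor) <;> ring

lemma Delta_x2 : (∑ x ∈ univ.filter (fun x : Bool × Bool => (!x.1) = false), rho x)
    = (∑ x ∈ univ.filter (fun x : Bool × Bool => (!x.1) = true), rho x)
      + ((2 * tc : ℝ) : ℂ) • (Pxm - Pxp) := by
  rw [show (univ.filter (fun x : Bool × Bool => (!x.1) = false))
        = {(true, false), (true, true)} by decide,
      show (univ.filter (fun x : Bool × Bool => (!x.1) = true))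
        = {(false, false), (false, true)} by decide]
  rw [Finset.sum_insert (by decide), Finset.sum_singleton,
      Finset.sum_insert (by decide), Finset.sum_singleton]
  show rho (true, false) + rho (true, true) = rho (false, false) + rho (false, true) + _
  simp only [rho, proj2, Pxp, Pxm]
  ext i j
  fin_cases i <;> fin_cases j <;>
    simp [Matrix.add_apply, Matrix.smul_apply, Matrix.sub_apply, _root_.map_mul, map_div₀,
      map_ofNat, _root_.map_sub, _root_.map_add, _root_.map_one, _root_.map_neg,
      Complex.conj_I, Complex.conj_ofReal, Complex.ext_iff, Complex.add_re, Complex.add_im,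
      Complex.mul_re, Complex.mul_im] <;>
    (try constructor) <;> ring

lemma Delta_y1 : (∑ x ∈ univ.filter (fun x : Bool × Bool => x.2 = false), rho x)
    = (∑ x ∈ univ.filter (fun x : Bool × Bool => x.2 = true), rho x)
      + ((2 * tc : ℝ) : ℂ) • (Pyp - Pym) := by
  rw [show (univ.filter (fun x : Bool × Bool => x.2 = false))
        = {(false, false), (true, false)} by decide,
      show (univ.filter (fun x : Bool × Bool => x.2 = true))
        = {(false, true), (true, true)} by decide]
  rw [Finset.sum_insert (by decide), Finset.sum_singleton,
      Finset.sum_insert (by decide), Finset.sum_singleton]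
  show rho (false, false) + rho (true, false) = rho (false, true) + rho (true, true) + _
  simp only [rho, proj2, Pyp, Pym]
  ext i j
  fin_cases i <;> fin_cases j <;>
    simp [Matrix.add_apply, Matrix.smul_apply, Matrix.sub_apply, _root_.map_mul, map_div₀,
      map_ofNat, _root_.map_sub, _root_.map_add, _root_.map_one, _root_.map_neg,
      Complex.conj_I, Complex.conj_ofReal, Complex.ext_iff, Complex.add_re, Complex.add_im,
      Complex.mul_re, Complex.mul_im, Complex.div_re, Complex.div_im,
      Complex.normSq_apply] <;>
    (try constructor) <;> ring

lemma Delta_y2 : (∑ x ∈ univ.filter (fun x : Bool × Bool => (!x.2) = false), rho x)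
    = (∑ x ∈ univ.filter (fun x : Bool × Bool => (!x.2) = true), rho x)
      + ((2 * tc : ℝ) : ℂ) • (Pym - Pyp) := by
  rw [show (univ.filter (fun x : Bool × Bool => (!x.2) = false))
        = {(false, true), (true, true)} by decide,
      show (univ.filter (fun x : Bool × Bool => (!x.2) = true))
        = {(false, false), (true, false)} by decide]
  rw [Finset.sum_insert (by decide), Finset.sum_singleton,
      Finset.sum_insert (by decide), Finset.sum_singleton]
  show rho (false, true) + rho (true, true) = rho (false, false) + rho (true, false) + _
  simp only [rho, proj2, Pyp, Pym]
  ext i j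
  fin_cases i <;> fin_cases j <;>
    simp [Matrix.add_apply, Matrix.smul_apply, Matrix.sub_apply, _root_.map_mul, map_div₀,
      map_ofNat, _root_.map_sub, _root_.map_add, _root_.map_one, _root_.map_neg,
      Complex.conj_I, Complex.conj_ofReal, Complex.ext_iff, Complex.add_re, Complex.add_im,
      Complex.mul_re, Complex.mul_im, Complex.div_re, Complex.div_im,
      Complex.normSq_apply] <;>
    (try constructor) <;> ring

lemma Delta_z1 : (∑ x ∈ univ.filter (fun x : Bool × Bool => xor x.1 x.2 = false), rho x)
    = (∑ x ∈ univ.filter (fun x : Bool × Bool => xor x.1 x.2 = true), rho x)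
      + ((2 * tc : ℝ) : ℂ) • (Pzp - Pzm) := by
  rw [show (univ.filter (fun x : Bool × Bool => xor x.1 x.2 = false))
        = {(false, false), (true, true)} by decide,
      show (univ.filter (fun x : Bool × Bool => xor x.1 x.2 = true))
        = {(false, true), (true, false)} by decide]
  rw [Finset.sum_insert (by decide), Finset.sum_singleton,
      Finset.sum_insert (by decide), Finset.sum_singleton]
  show rho (false, false) + rho (true, true) = rho (false, true) + rho (true, false) + _
  simp only [rho, proj2, Pzp, Pzm]
  ext i j
  fin_cases i <;> fin_cases j <;>
    simp [Matrix.add_apply, Matrix.smul_apply, Matrix.sub_apply, _root_.map_mul, map_div₀,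
      map_ofNat, _root_.map_sub, _root_.map_add, _root_.map_one, _root_.map_neg,
      Complex.conj_I, Complex.conj_ofReal, Complex.ext_iff, Complex.add_re, Complex.add_im,
      Complex.mul_re, Complex.mul_im] <;>
    (try constructor) <;> ring

lemma Delta_z2 : (∑ x ∈ univ.filter (fun x : Bool × Bool => (!(xor x.1 x.2)) = false), rho x)
    = (∑ x ∈ univ.filter (fun x : Bool × Bool => (!(xor x.1 x.2)) = true), rho x)
      + ((2 * tc : ℝ) : ℂ) • (Pzm - Pzp) := by
  rw [show (univ.filter (fun x : Bool × Bool => (!(xor x.1 x.2)) = false))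
        = {(false, true), (true, false)} by decide,
      show (univ.filter (fun x : Bool × Bool => (!(xor x.1 x.2)) = true))
        = {(false, false), (true, true)} by decide]
  rw [Finset.sum_insert (by decide), Finset.sum_singleton,
      Finset.sum_insert (by decide), Finset.sum_singleton]
  show rho (false, true) + rho (true, false) = rho (false, false) + rho (true, true) + _
  simp only [rho, proj2, Pzp, Pzm]
  ext i j
  fin_cases i <;> fin_cases j <;>
    simp [Matrix.add_apply, Matrix.smul_apply, Matrix.sub_apply, _root_.map_mul, map_div₀,
      map_ofNat, _root_.map_sub, _root_.map_add, _root_.map_one, _root_.map_neg,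
      Complex.conj_I, Complex.conj_ofReal, Complex.ext_iff, Complex.add_re, Complex.add_im,
      Complex.mul_re, Complex.mul_im] <;>
    (try constructor) <;> ring

end Deltas

lemma bal_cases : ∀ f ∈ Bal, f = (fun x => x.1) ∨ f = (fun x => !x.1) ∨ f = (fun x => x.2)
    ∨ f = (fun x => !x.2) ∨ f = (fun x => xor x.1 x.2) ∨ f = (fun x => !(xor x.1 x.2)) := by
  decide


/-- **Third part of Lemma `lem:compex`** (the quantum bound is attained). -/
theorem lemma_compex_quantum_attained :
    ∃ ρ : (Bool × Bool) → Matrix (Fin 2) (Fin 2) ℂ,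
      (∀ x, (ρ x).PosSemidef) ∧ (∀ x, (ρ x).trace = 1) ∧
      ∑ f, PF f * dQuant (fun _ => (1 / 4 : ℝ)) ρ f = 1 / (2 * Real.sqrt 3) := by
  refine ⟨rho, rho_psd, rho_trace, ?_⟩
  have hBal : ∀ f ∈ Bal, dQuant (fun _ => (1 / 4 : ℝ)) rho f = tc / 2 := by
    intro f hf
    rcases bal_cases f hf with h | h | h | h | h | h <;> subst h
    · exact dq_eq _ Pxp Pxm Pxp_psd Pxm_psd Px_sum Delta_x1 Px_tr1 Px_tr2
    · exact dq_eq _ Pxm Pxp Pxm_psd Pxp_psd (by rw [add_comm]; exact Px_sum) Delta_x2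
        (tr_swap_pos Px_tr2) (tr_swap_neg Px_tr1)
    · exact dq_eq _ Pyp Pym Pyp_psd Pym_psd Py_sum Delta_y1 Py_tr1 Py_tr2
    · exact dq_eq _ Pym Pyp Pym_psd Pyp_psd (by rw [add_comm]; exact Py_sum) Delta_y2
        (tr_swap_pos Py_tr2) (tr_swap_neg Py_tr1)
    · exact dq_eq _ Pzp Pzm Pzp_psd Pzm_psd Pz_sum Delta_z1 Pz_tr1 Pz_tr2
    · exact dq_eq _ Pzm Pzp Pzm_psd Pzp_psd (by rw [add_comm]; exact Pz_sum) Delta_z2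
        (tr_swap_pos Pz_tr2) (tr_swap_neg Pz_tr1)
  have hcard : Bal.card = 6 := by decide
  calc ∑ f, PF f * dQuant (fun _ => (1 / 4 : ℝ)) rho f
      = ∑ f ∈ Bal, PF f * dQuant (fun _ => (1 / 4 : ℝ)) rho f :=
        (Finset.sum_subset (Finset.subset_univ _)
          (fun f _ hfn => by simp [PF, hfn])).symm
    _ = ∑ f ∈ Bal, (1/6 : ℝ) * (tc / 2) := by
        apply Finset.sum_congr rfl
        intro f hf
        rw [hBal f hf]
        simp [PF, hf, hcard]
    _ = tc / 2 := by
        rw [Finset.sum_const, hcard]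
        push_cast
        ring
    _ = 1 / (2 * Real.sqrt 3) := by
        unfold tc
        have h3 : (0:ℝ) < Real.sqrt 3 := Real.sqrt_pos.mpr (by norm_num)
        field_simp
end
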